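/- Let K be a field with discrete valuation v and residue field k. The tame symbol satisfies the Steinberg relation: for α ∈ K^* with α ≠ 1, the tame symbol of (α, 1-α) equals 1 in k^*. -/

import Mathlib

/-- the tame symbol satisfies the Steinberg relation: for `α ∈ K^*`
with `α ≠ 1`, the tame symbol of `(α, 1-α)` equals `1` in the residue field `k^*`.
(The element `(-1)^{v(α)v(1-α)} α^{v(1-α)} (1-α)^{-v(α)}` has valuation `0`, hence
lies in the valuation ring `O`; we quantify over its representatives in `O`.) -/
theorem vostokov_stmt6 {K k : Type*} [Field K] [Field k]
    (v : K → ℤ) (O : Subring K) (ρ : O →+* k)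
    (hmul : ∀ x y : K, x ≠ 0 → y ≠ 0 → v (x * y) = v x + v y)
    (hO : ∀ x : K, x ≠ 0 → (0 ≤ v x ↔ x ∈ O))
    (hker : ∀ x : O, ρ x = 0 ↔ (x : K) = 0 ∨ 0 < v (x : K))
    (α : Kˣ) (hα : (α : K) ≠ 1) (x : O)
    (hx : (x : K) = (-1 : K) ^ (v (α : K) * v (1 - (α : K))) *
        (α : K) ^ v (1 - (α : K)) * ((1 - (α : K)) ^ v (α : K))⁻¹) :
    ρ x = 1 := by
  have hα0 : (α : K) ≠ 0 := α.ne_zero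
  have h1α : (1 : K) - α ≠ 0 := sub_ne_zero.mpr (Ne.symm hα)
  have hv1 : v 1 = 0 := by
    have := hmul 1 1 one_ne_zero one_ne_zero
    rw [mul_one] at this; omega
  have hvneg : ∀ y : K, y ≠ 0 → v (-y) = v y := by
    intro y hy
    have h1 := hmul (-1) (-1) (by norm_num) (by norm_num)
    rw [neg_mul_neg, one_mul, hv1] at h1
    have h2 := hmul (-1) y (by norm_num) hy
    rw [neg_one_mul] at h2; omega
  have hvinv : ∀ y : K, y ≠ 0 → v y⁻¹ = - v y := by
    intro y hy
    have := hmul y y⁻¹ hy (inv_ne_zero hy)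
    rw [mul_inv_cancel₀ hy, hv1] at this; omega
  have h1O : (1 : K) ∈ O := O.one_mem
  -- key lemma : v β > 0 implies v (1 - β) = 0
  have key0 : ∀ β : K, β ≠ 0 → 0 < v β → v (1 - β) = 0 := by
    intro β hβ hv
    have hne : (1 : K) - β ≠ 0 := by
      intro h
      rw [sub_eq_zero] at h
      rw [← h, hv1] at hv; omega
    have hβO : β ∈ O := (hO β hβ).1 hv.le
    have hmem : (1 : K) - β ∈ O := O.sub_mem h1O hβO
    have hge : 0 ≤ v (1 - β) := (hO _ hne).2 hmem
    rcases eq_or_lt_of_le hge with h | hgt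
    · omega
    · exfalso
      have e1 : ρ ⟨1 - β, hmem⟩ = 0 := (hker _).2 (Or.inr hgt)
      have e2 : ρ ⟨β, hβO⟩ = 0 := (hker _).2 (Or.inr hv)
      have e3 : (⟨1 - β, hmem⟩ : O) + ⟨β, hβO⟩ = 1 := by
        apply Subtype.ext; push_cast; ring
      have := congrArg ρ e3
      rw [map_add, map_one, e1, e2] at this
      simp at this
  -- key lemma : v β < 0 implies v (1 - β) = v β
  have keylt : ∀ β : K, β ≠ 0 → v β < 0 → v (1 - β) = v β := by
    intro β hβ hv
    have hβi : v β⁻¹ = - v β := hvinv β hβ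
    have h0 : v (1 - β⁻¹) = 0 := key0 β⁻¹ (inv_ne_zero hβ) (by omega)
    have hne : (1 : K) - β⁻¹ ≠ 0 := by
      intro h
      rw [sub_eq_zero] at h
      rw [← h, hv1] at hβi; omega
    have heq : (1 : K) - β = -β * (1 - β⁻¹) := by field_simp; ring
    rw [heq, hmul (-β) _ (neg_ne_zero.mpr hβ) hne, hvneg β hβ, h0]; omega
  rcases lt_trichotomy (v (α : K)) 0 with ha | ha | ha
  · -- v α < 0 ; then v (1 - α) = v α
    have hb : v (1 - (α : K)) = v (α : K) := keylt α hα0 ha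
    obtain ⟨n, hn⟩ : ∃ n : ℕ, v (α : K) = -(n : ℤ) :=
      ⟨(-(v (α : K))).toNat, by omega⟩
    have hvi : v (α : K)⁻¹ = -(v (α : K)) := hvinv α hα0
    have hw0 : v (1 - (α : K)⁻¹) = 0 := key0 _ (inv_ne_zero hα0) (by omega)
    have hwne : (1 : K) - (α : K)⁻¹ ≠ 0 := by
      intro h
      rw [sub_eq_zero] at h
      rw [← h, hv1] at hvi; omega
    have memw : (1 : K) - (α : K)⁻¹ ∈ O := (hO _ hwne).1 (by omega)
    have memi : (α : K)⁻¹ ∈ O := (hO _ (inv_ne_zero hα0)).1 (by omega)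
    have hρi : ρ ⟨(α : K)⁻¹, memi⟩ = 0 := (hker _).2 (Or.inr (by simpa using (by omega : 0 < v (α:K)⁻¹)))
    have hρw : ρ ⟨1 - (α : K)⁻¹, memw⟩ = 1 := by
      have e3 : (⟨1 - (α : K)⁻¹, memw⟩ : O) = 1 - ⟨(α : K)⁻¹, memi⟩ := by
        apply Subtype.ext; push_cast; ring
      rw [e3, map_sub, map_one, hρi, sub_zero]
    have hsign : (-1 : K) ^ (n * n) = (-1 : K) ^ n := by
      rcases Nat.even_or_odd n with h | h
      · rw [(h.mul_right n).neg_one_pow, h.neg_one_pow]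
      · rw [(h.mul h).neg_one_pow, h.neg_one_pow]
    have hxw : x = (⟨1 - (α : K)⁻¹, memw⟩ : O) ^ n := by
      apply Subtype.ext
      push_cast
      rw [hx, hb, hn]
      have hrw : (1 : K) - (α : K)⁻¹ = -1 * ((1 - α) * (α : K)⁻¹) := by
        field_simp
        ring
      rw [hrw, mul_pow, mul_pow, inv_pow]
      rw [neg_mul_neg, zpow_neg, zpow_neg, zpow_natCast, zpow_natCast, inv_inv,
        ← Nat.cast_mul, zpow_natCast, hsign]
      ring
    rw [hxw, map_pow, hρw, one_pow]
  · -- v α = 0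
    have hbge : 0 ≤ v (1 - (α : K)) := by
      by_contra h
      push_neg at h
      have := keylt _ h1α h
      rw [sub_sub_cancel] at this
      omega
    rcases eq_or_lt_of_le hbge with hb | hb
    · -- v (1-α) = 0 : x = 1
      have hx1 : (x : K) = 1 := by
        rw [hx, ha, ← hb]
        simp
      have : x = 1 := Subtype.ext (by simpa using hx1)
      rw [this, map_one]
    · -- v (1-α) > 0 : x = α^n with ρ α = 1
      obtain ⟨n, hn⟩ : ∃ n : ℕ, v (1 - (α : K)) = (n : ℤ) :=
        ⟨(v (1 - (α : K))).toNat, by omega⟩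
      have memα : (α : K) ∈ O := (hO _ hα0).1 (by omega)
      have mem1 : (1 : K) - α ∈ O := (hO _ h1α).1 (by omega)
      have hρ1 : ρ ⟨1 - (α : K), mem1⟩ = 0 := (hker _).2 (Or.inr hb)
      have hρα : ρ ⟨(α : K), memα⟩ = 1 := by
        have e3 : (⟨(α : K), memα⟩ : O) = 1 - ⟨1 - (α : K), mem1⟩ := by
          apply Subtype.ext; push_cast; ring
        rw [e3, map_sub, map_one, hρ1, sub_zero]
      have hxα : x = (⟨(α : K), memα⟩ : O) ^ n := by
        apply Subtype.ext
        push_cast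
        rw [hx, ha, hn]
        simp [zpow_natCast]
      rw [hxα, map_pow, hρα, one_pow]
  · -- v α > 0 : v (1-α) = 0, x = ((1-α)^n)⁻¹
    have hb : v (1 - (α : K)) = 0 := key0 α hα0 ha
    obtain ⟨n, hn⟩ : ∃ n : ℕ, v (α : K) = (n : ℤ) :=
      ⟨(v (α : K)).toNat, by omega⟩
    have memα : (α : K) ∈ O := (hO _ hα0).1 ha.le
    have memu : (1 : K) - α ∈ O := (hO _ h1α).1 (by omega)
    have hρα : ρ ⟨(α : K), memα⟩ = 0 := (hker _).2 (Or.inr ha)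
    have hρu : ρ ⟨1 - (α : K), memu⟩ = 1 := by
      have e3 : (⟨1 - (α : K), memu⟩ : O) = 1 - ⟨(α : K), memα⟩ := by
        apply Subtype.ext; push_cast; ring
      rw [e3, map_sub, map_one, hρα, sub_zero]
    have hxu : x * (⟨1 - (α : K), memu⟩ : O) ^ n = 1 := by
      apply Subtype.ext
      push_cast
      rw [hx, hb, hn]
      simp only [mul_zero, zpow_zero, one_mul, mul_one, zpow_natCast]
      exact inv_mul_cancel₀ (pow_ne_zero n h1α)
    have := congrArg ρ hxu
    rw [map_mul, map_pow, hρu, one_pow, mul_one, map_one] at this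
    exact this
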